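/- Assume the Ordered-Degree Condition deg m_0 ≤ deg m_1 ≤ … ≤ deg m_{n-1}. Then for every nonzero a ∈ F[x] with deg a < K, the number of indices i ∈ {0,…,n-1} with a mod m_i ≠ 0 is at least n − k + 1; i.e., every nonzero codeword of the polynomial remainder code has Hamming weight at least n − k + 1. -/

import Mathlib

open Polynomial Finset

/-- For a strictly monotone map into `ℕ`, the `j`-th value is at least `j`. -/
lemma strictMono_fin_le_apply {k : ℕ} (f : Fin k → ℕ) (hf : StrictMono f) :
    ∀ j : Fin k, (j : ℕ) ≤ f j := by
  suffices h : ∀ t : ℕ, ∀ ht : t < k, t ≤ f ⟨t, ht⟩ by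
    intro j; exact h j j.2
  intro t
  induction t with
  | zero => intro ht; exact Nat.zero_le _
  | succ t ih =>
    intro ht
    have ht' : t < k := Nat.lt_of_succ_lt ht
    have h1 : f ⟨t, ht'⟩ < f ⟨t + 1, ht⟩ := hf (by simp [Fin.lt_def])
    have h2 := ih ht'
    omega

/-- Under the Ordered-Degree Condition, every nonzero codeword of a polynomial
remainder code has Hamming weight at least `n − k + 1`. -/
theorem polynomial_remainder_code_min_hamming_weight
    {F : Type*} [Field F] [DecidableEq F] (n : ℕ) (hn : 1 ≤ n)
    (m : Fin n → F[X])
    (hmonic : ∀ i, (m i).Monic)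
    (hdeg : ∀ i, 1 ≤ (m i).natDegree)
    (hcop : ∀ i j, i ≠ j → IsCoprime (m i) (m j))
    (k : ℕ) (hk1 : 1 ≤ k) (hkn : k ≤ n)
    (K : ℕ)
    (hK : K = (∏ i ∈ Finset.univ.filter (fun i : Fin n => (i : ℕ) < k), m i).natDegree)
    (hord : ∀ i j : Fin n, i ≤ j → (m i).natDegree ≤ (m j).natDegree) :
    ∀ a : F[X], a ≠ 0 → a.degree < (K : WithBot ℕ) →
      n - k + 1 ≤ (Finset.univ.filter (fun i : Fin n => a %ₘ m i ≠ 0)).card := by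
  intro a ha hadeg
  -- `Z` : indices where the residue is zero, i.e. `m i ∣ a`.
  set Z : Finset (Fin n) := Finset.univ.filter (fun i : Fin n => a %ₘ m i = 0) with hZ
  have hcardsum : Z.card + (Finset.univ.filter (fun i : Fin n => a %ₘ m i ≠ 0)).card = n := by
    rw [hZ]
    rw [Finset.card_filter_add_card_filter_not (p := fun i : Fin n => a %ₘ m i = 0)]
    simp
  -- It suffices to show `Z.card < k`.
  suffices hZk : Z.card < k by omega
  by_contra hcon
  push_neg at hcon
  -- take a subset of `Z` of cardinality exactly `k`
  obtain ⟨Z', hZ'sub, hZ'card⟩ := Finset.exists_subset_card_eq hcon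
  -- the product over `Z` divides `a`
  have hdvd : ∏ i ∈ Z, m i ∣ a := by
    apply Finset.prod_dvd_of_coprime
    · intro i _ j _ hij
      exact hcop i j hij
    · intro i hi
      rw [hZ, Finset.mem_filter] at hi
      exact (modByMonic_eq_zero_iff_dvd (hmonic i)).mp hi.2
  have hprodne : ∀ (S : Finset (Fin n)), (∏ i ∈ S, m i) ≠ 0 := fun S =>
    (monic_prod_of_monic S m (fun i _ => hmonic i)).ne_zero
  have hdegZ : (∏ i ∈ Z, m i).natDegree ≤ a.natDegree :=
    Polynomial.natDegree_le_of_dvd hdvd ha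
  have hsumdeg : ∀ (S : Finset (Fin n)), (∏ i ∈ S, m i).natDegree = ∑ i ∈ S, (m i).natDegree :=
    fun S => Polynomial.natDegree_prod _ _ (fun i _ => (hmonic i).ne_zero)
  -- degree bound: `natDegree a < K`
  have haK : a.natDegree < K := by
    rwa [← Polynomial.natDegree_lt_iff_degree_lt ha] at hadeg
  -- key inequality: `K ≤ ∑_{i ∈ Z'} natDegree (m i)`
  have hkey : K ≤ ∑ i ∈ Z', (m i).natDegree := by
    rw [hK, hsumdeg]
    -- order embedding enumerating `Z'`
    set e := Z'.orderEmbOfFin hZ'card with he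
    have hmono : StrictMono (fun j : Fin k => ((e j : Fin n) : ℕ)) := by
      intro x y hxy
      exact_mod_cast e.strictMono hxy
    have hle : ∀ j : Fin k, (j : ℕ) ≤ ((e j : Fin n) : ℕ) :=
      strictMono_fin_le_apply _ hmono
    have h1 : ∑ i ∈ Finset.univ.filter (fun i : Fin n => (i : ℕ) < k), (m i).natDegree
        = ∑ j : Fin k, (m (Fin.castLE hkn j)).natDegree := by
      have himg : Finset.univ.filter (fun i : Fin n => (i : ℕ) < k)
          = Finset.image (Fin.castLE hkn) Finset.univ := by
        ext i
        simp only [Finset.mem_filter, Finset.mem_image, Finset.mem_univ, true_and]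
        constructor
        · intro hi; exact ⟨⟨(i : ℕ), hi⟩, by ext; simp⟩
        · rintro ⟨j, rfl⟩; exact j.2
      rw [himg, Finset.sum_image (fun x _ y _ h => Fin.castLE_injective hkn h)]
    have h2 : ∑ i ∈ Z', (m i).natDegree = ∑ j : Fin k, (m (e j)).natDegree := by
      have himg : Z' = Finset.image (fun j => (e j : Fin n)) Finset.univ := by
        have := Finset.range_orderEmbOfFin Z' hZ'card
        ext i
        simp only [Finset.mem_image, Finset.mem_univ, true_and]
        constructor
        · intro hi
          have : i ∈ Set.range (Z'.orderEmbOfFin hZ'card) := by rw [this]; exact hi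
          obtain ⟨j, hj⟩ := this; exact ⟨j, hj⟩
        · rintro ⟨j, rfl⟩; exact Finset.orderEmbOfFin_mem Z' hZ'card j
      rw [himg, Finset.sum_image (fun x _ y _ h => e.injective h)]
    rw [h1, h2]
    apply Finset.sum_le_sum
    intro j _
    exact hord _ _ (by simpa [Fin.le_def] using hle j)
  -- but `∑_{i ∈ Z'} ≤ ∑_{i ∈ Z} ≤ natDegree a < K`, contradiction
  have hsub : ∑ i ∈ Z', (m i).natDegree ≤ ∑ i ∈ Z, (m i).natDegree :=
    Finset.sum_le_sum_of_subset hZ'sub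
  rw [hsumdeg] at hdegZ
  omega
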